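/- arXiv:2101.04818 — 2 statements merged into one kernel-verified Lean document; each statement's English description precedes it below -/
import Mathlib

section
/- Fix n ≥ 1 and let G_n be the weighted graph with vertex set {a_1,…,a_n, b_1,…,b_n} and weights w(a_i,b_j) = 1 for all i ≠ j and weight 0 on all other unordered pairs (including each pair {a_i,b_i}). Then every hierarchical clustering tree T on G_n in which, for each i, the leaves a_i and b_i are the two children of a common internal node satisfies val(T) = (4/3)·(n³ − n). -/
open Finset

/-- A hierarchical clustering tree: a rooted binary tree with leaves labelled by vertices. -/
inductive HC (V : Type*) where
  | leaf : V → HC V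
  | node : HC V → HC V → HC V

namespace HC

variable {V : Type*}

/-- The list of leaf labels of a tree, left to right. -/
def leafList : HC V → List V
  | .leaf v => [v]
  | .node l r => leafList l ++ leafList r

/-- The set of leaf labels of a tree. -/
def leaves [DecidableEq V] (t : HC V) : Finset V :=
  t.leafList.toFinset

/-- `t.cluster i j` is the leaf set of the subtree of `t` rooted at the least common
ancestor of the leaves `i` and `j` (i.e. `leaves(T[i ∨ j])`). -/
def cluster [DecidableEq V] : HC V → V → V → Finset V
  | .leaf v, _, _ => {v}
  | .node l r, i, j =>
    if i ∈ l.leaves ∧ j ∈ l.leaves then l.cluster i j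
    else if i ∈ r.leaves ∧ j ∈ r.leaves then r.cluster i j
    else (HC.node l r).leaves

/-- `t` is a hierarchical clustering tree on the whole vertex type `V`:
its leaves are in bijection with `V`. -/
def IsTreeOn [Fintype V] [DecidableEq V] (t : HC V) : Prop :=
  t.leafList.Nodup ∧ t.leaves = Finset.univ

/-- Sum of `f A B` over all internal nodes of the tree, where `A`, `B` are the
leaf sets of the two children of the internal node. -/
def internalSum [DecidableEq V] (f : Finset V → Finset V → ℝ) : HC V → ℝ
  | .leaf _ => 0
  | .node l r => f l.leaves r.leaves + internalSum f l + internalSum f r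

/-- The list of all subtrees of a tree. -/
def subtreesList : HC V → List (HC V)
  | .leaf v => [.leaf v]
  | .node l r => .node l r :: (subtreesList l ++ subtreesList r)

/-- Dasgupta's cost: sum over unordered pairs `{i,j}` of distinct vertices of
`w i j * |leaves(T[i ∨ j])|`. -/
noncomputable def cost [Fintype V] [DecidableEq V] (w : V → V → ℝ) (t : HC V) : ℝ :=
  (1 / 2) * ∑ p ∈ Finset.univ.offDiag, w p.1 p.2 * ((t.cluster p.1 p.2).card : ℝ)

/-- Moseley–Wang revenue: sum over unordered pairs `{i,j}` of distinct vertices of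
`w i j * |nonleaves(T[i ∨ j])|`. -/
noncomputable def rev [Fintype V] [DecidableEq V] (w : V → V → ℝ) (t : HC V) : ℝ :=
  (1 / 2) * ∑ p ∈ Finset.univ.offDiag,
    w p.1 p.2 * ((Finset.univ \ t.cluster p.1 p.2).card : ℝ)

/-- Cohen-Addad et al.'s value: the same formula as cost, used for dissimilarity weights. -/
noncomputable def val [Fintype V] [DecidableEq V] (w : V → V → ℝ) (t : HC V) : ℝ :=
  cost w t

end HC

/-- The total weight `W`: the sum of `w i j` over unordered pairs of distinct vertices. -/
noncomputable def totalWeight {V : Type*} [Fintype V] [DecidableEq V] (w : V → V → ℝ) : ℝ :=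
  (1 / 2) * ∑ p ∈ Finset.univ.offDiag, w p.1 p.2

/-- The merge cost of merging disjoint clusters `A` and `B`. -/
noncomputable def mergeCost {V : Type*} [Fintype V] [DecidableEq V] (w : V → V → ℝ) (A B : Finset V) : ℝ :=
  (B.card : ℝ) * ∑ a ∈ A, ∑ c ∈ Finset.univ \ (A ∪ B), w a c
    + (A.card : ℝ) * ∑ b ∈ B, ∑ c ∈ Finset.univ \ (A ∪ B), w b c

/-- The merge revenue of merging disjoint clusters `A` and `B`. -/
noncomputable def mergeRev {V : Type*} [Fintype V] (w : V → V → ℝ) (A B : Finset V) : ℝ :=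
  ((Fintype.card V : ℝ) - (A.card : ℝ) - (B.card : ℝ)) * ∑ a ∈ A, ∑ b ∈ B, w a b

/-- The average linkage between disjoint nonempty clusters `A` and `B`. -/
noncomputable def avgLinkage {V : Type*} (w : V → V → ℝ) (A B : Finset V) : ℝ :=
  (1 / ((A.card : ℝ) * (B.card : ℝ))) * ∑ a ∈ A, ∑ b ∈ B, w a b

/-- A matching encoded as an involution `f : V → V`: the matched pairs are the pairs
`{v, f v}` with `f v ≠ v`; its weight is the sum of weights of matched pairs. -/
noncomputable def matchingWeight {V : Type*} [Fintype V] [DecidableEq V] (w : V → V → ℝ) (f : V → V) : ℝ :=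
  (1 / 2) * ∑ v ∈ Finset.univ.filter (fun v => f v ≠ v), w v (f v)

/-- A perfect matching encoded as a fixed-point-free involution. -/
def IsPerfectMatching {V : Type*} (f : V → V) : Prop :=
  (∀ v, f (f v) = v) ∧ ∀ v, f v ≠ v



namespace HC

lemma leaves_leaf [DecidableEq V] (v : V) : (leaf v : HC V).leaves = {v} := rfl

lemma leaves_node' [DecidableEq V] (l r : HC V) :
    (node l r).leaves = l.leaves ∪ r.leaves := by
  simp [leaves, leafList]

lemma leaves_subset_of_mem_subtrees [DecidableEq V] {s : HC V} :
    ∀ {t : HC V}, s ∈ t.subtreesList → s.leaves ⊆ t.leaves := by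
  intro t
  induction t with
  | leaf v => intro h; simp [subtreesList] at h; subst h; exact subset_rfl
  | node l r ihl ihr =>
    intro h
    simp only [subtreesList, List.mem_cons, List.mem_append] at h
    rcases h with h | h | h
    · subst h; exact subset_rfl
    · rw [leaves_node']; exact (ihl h).trans subset_union_left
    · rw [leaves_node']; exact (ihr h).trans subset_union_right

lemma nodup_parts [DecidableEq V] {l r : HC V} (h : (node l r).leafList.Nodup) :
    l.leafList.Nodup ∧ r.leafList.Nodup ∧ Disjoint l.leaves r.leaves := by
  rw [show (node l r).leafList = l.leafList ++ r.leafList from rfl, List.nodup_append] at h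
  exact ⟨h.1, h.2.1, List.disjoint_toFinset_iff_disjoint.mpr (fun a ha hb => h.2.2 a ha a hb rfl)⟩

lemma cluster_sum [DecidableEq V] (w : V → V → ℝ) (t : HC V) (hnd : t.leafList.Nodup) :
    ∑ p ∈ t.leaves.offDiag, w p.1 p.2 * ((t.cluster p.1 p.2).card : ℝ)
    = internalSum (fun A B => (((A ∪ B).card : ℝ)) * ∑ a ∈ A, ∑ b ∈ B, (w a b + w b a)) t := by
  induction t with
  | leaf v => simp [leaves, leafList, internalSum]
  | node l r ihl ihr =>
    obtain ⟨hl, hr, hdis⟩ := nodup_parts hnd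
    set A := l.leaves with hA
    set B := r.leaves with hB
    have d3 : Disjoint A.offDiag B.offDiag := by
      rw [Finset.disjoint_left]
      rintro ⟨x, y⟩ hx hy
      exact Finset.disjoint_left.mp hdis (mem_offDiag.1 hx).1 (mem_offDiag.1 hy).1
    have d2 : Disjoint (A.offDiag ∪ B.offDiag) (A ×ˢ B) := by
      rw [Finset.disjoint_left]
      rintro ⟨x, y⟩ hx hy
      rw [mem_product] at hy
      rcases Finset.mem_union.1 hx with h | h
      · exact Finset.disjoint_left.mp hdis (mem_offDiag.1 h).2.1 hy.2
      · exact Finset.disjoint_left.mp hdis hy.1 (mem_offDiag.1 h).1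
    have d1 : Disjoint (A.offDiag ∪ B.offDiag ∪ A ×ˢ B) (B ×ˢ A) := by
      rw [Finset.disjoint_left]
      rintro ⟨x, y⟩ hx hy
      rw [mem_product] at hy
      rcases Finset.mem_union.1 hx with h | h
      · rcases Finset.mem_union.1 h with h' | h'
        · exact Finset.disjoint_left.mp hdis (mem_offDiag.1 h').1 hy.1
        · exact Finset.disjoint_left.mp hdis hy.2 (mem_offDiag.1 h').2.1
      · exact Finset.disjoint_left.mp hdis (mem_product.1 h).1 hy.1
    rw [leaves_node', offDiag_union hdis, Finset.sum_union d1, Finset.sum_union d2,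
      Finset.sum_union d3]
    have cl_left : ∀ p ∈ A.offDiag,
        w p.1 p.2 * (((node l r).cluster p.1 p.2).card : ℝ)
        = w p.1 p.2 * ((l.cluster p.1 p.2).card : ℝ) := by
      rintro ⟨x, y⟩ hp
      rw [mem_offDiag] at hp
      rw [show (node l r).cluster x y = l.cluster x y from if_pos ⟨hp.1, hp.2.1⟩]
    have cl_right : ∀ p ∈ B.offDiag,
        w p.1 p.2 * (((node l r).cluster p.1 p.2).card : ℝ)
        = w p.1 p.2 * ((r.cluster p.1 p.2).card : ℝ) := by
      rintro ⟨x, y⟩ hp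
      rw [mem_offDiag] at hp
      have h1 : ¬ (x ∈ A ∧ y ∈ A) := fun h => Finset.disjoint_left.mp hdis h.1 hp.1
      rw [show (node l r).cluster x y = r.cluster x y by
        rw [cluster]; rw [if_neg h1, if_pos ⟨hp.1, hp.2.1⟩]]
    have cl_cross1 : ∀ p ∈ A ×ˢ B,
        w p.1 p.2 * (((node l r).cluster p.1 p.2).card : ℝ)
        = w p.1 p.2 * (((A ∪ B).card : ℝ)) := by
      rintro ⟨x, y⟩ hp
      rw [mem_product] at hp
      have h1 : ¬ (x ∈ A ∧ y ∈ A) := fun h => Finset.disjoint_left.mp hdis h.2 hp.2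
      have h2 : ¬ (x ∈ B ∧ y ∈ B) := fun h => Finset.disjoint_left.mp hdis hp.1 h.1
      rw [show (node l r).cluster x y = A ∪ B by
        rw [cluster, if_neg h1, if_neg h2, leaves_node']]
    have cl_cross2 : ∀ p ∈ B ×ˢ A,
        w p.1 p.2 * (((node l r).cluster p.1 p.2).card : ℝ)
        = w p.1 p.2 * (((A ∪ B).card : ℝ)) := by
      rintro ⟨x, y⟩ hp
      rw [mem_product] at hp
      have h1 : ¬ (x ∈ A ∧ y ∈ A) := fun h => Finset.disjoint_left.mp hdis h.1 hp.1
      have h2 : ¬ (x ∈ B ∧ y ∈ B) := fun h => Finset.disjoint_left.mp hdis hp.2 h.2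
      rw [show (node l r).cluster x y = A ∪ B by
        rw [cluster, if_neg h1, if_neg h2, leaves_node']]
    rw [Finset.sum_congr rfl cl_left, Finset.sum_congr rfl cl_right,
      Finset.sum_congr rfl cl_cross1, Finset.sum_congr rfl cl_cross2,
      ihl hl, ihr hr]
    rw [show internalSum (fun A B => (((A ∪ B).card : ℝ)) * ∑ a ∈ A, ∑ b ∈ B, (w a b + w b a))
        (node l r) = (((A ∪ B).card : ℝ)) * (∑ a ∈ A, ∑ b ∈ B, (w a b + w b a))
        + internalSum _ l + internalSum _ r from rfl]
    rw [Finset.sum_product, Finset.sum_product]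
    rw [Finset.sum_comm (s := B) (t := A)]
    simp only [← Finset.sum_mul, Finset.sum_add_distrib]
    ring

end HC

/-- The weighted graph `G_n`: vertices `a_1,...,a_n` (left) and `b_1,...,b_n` (right),
`w(a_i, b_j) = 1` for `i ≠ j`, and weight `0` on all other pairs. -/
noncomputable def wG (n : ℕ) : (Fin n ⊕ Fin n) → (Fin n ⊕ Fin n) → ℝ :=
  fun x y =>
    match x, y with
    | Sum.inl i, Sum.inr j => if i = j then 0 else 1
    | Sum.inr i, Sum.inl j => if i = j then 0 else 1
    | _, _ => 0

/-- For each `i`, the leaves `a_i` and `b_i` are the two children of a common internal node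
of `t` (in either order). -/
def pairCond (n : ℕ) (t : HC (Fin n ⊕ Fin n)) : Prop :=
  ∀ i : Fin n,
    HC.node (HC.leaf (Sum.inl i)) (HC.leaf (Sum.inr i)) ∈ t.subtreesList ∨
    HC.node (HC.leaf (Sum.inr i)) (HC.leaf (Sum.inl i)) ∈ t.subtreesList



namespace HC

lemma half {n : ℕ} {B : Finset (Fin n ⊕ Fin n)}
    (hB : ∀ i, Sum.inl i ∈ B ↔ Sum.inr i ∈ B) :
    (B.filter (fun x => x.isLeft = true)).card
      = (B.filter (fun x => x.isLeft = false)).card := by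
  apply Finset.card_nbij' Sum.swap Sum.swap
  · rintro (i | i) h <;> simp only [Finset.mem_coe, Finset.mem_filter] at h ⊢
    · exact ⟨by simpa using (hB i).1 h.1, by simp⟩
    · simp at h
  · rintro (i | i) h <;> simp only [Finset.mem_coe, Finset.mem_filter] at h ⊢
    · simp at h
    · exact ⟨by simpa using (hB i).2 h.1, by simp⟩
  · intro a _; simp
  · intro a _; simp

lemma two_half {n : ℕ} {B : Finset (Fin n ⊕ Fin n)}
    (hB : ∀ i, Sum.inl i ∈ B ↔ Sum.inr i ∈ B) :
    2 * (B.filter (fun x => x.isLeft = true)).card = B.card := by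
  have := Finset.card_filter_add_card_filter_not
    (s := B) (p := fun x => x.isLeft = true)
  rw [two_mul]
  nth_rewrite 2 [half hB]
  rw [← this]
  congr 1
  apply Finset.card_nbij' id id <;> intro a h <;> simp_all

lemma cut_eq {n : ℕ} {A B : Finset (Fin n ⊕ Fin n)}
    (hB : ∀ i, Sum.inl i ∈ B ↔ Sum.inr i ∈ B) (hdis : Disjoint A B) :
    ∑ a ∈ A, ∑ b ∈ B, (wG n a b + wG n b a) = (A.card : ℝ) * B.card := by
  have inner : ∀ a ∈ A, ∑ b ∈ B, (wG n a b + wG n b a) = (B.card : ℝ) := by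
    intro a ha
    have step : ∀ b ∈ B, wG n a b + wG n b a
        = if b.isLeft ≠ a.isLeft then (2 : ℝ) else 0 := by
      intro b hb
      rcases a with i | i <;> rcases b with j | j
      · simp [wG]
      · have hij : i ≠ j := by
          rintro rfl
          exact Finset.disjoint_left.mp hdis ha ((hB i).2 hb)
        simp [wG, hij, Ne.symm hij]
        norm_num
      · have hij : i ≠ j := by
          rintro rfl
          exact Finset.disjoint_left.mp hdis ha ((hB i).1 hb)
        simp [wG, hij, Ne.symm hij]
        norm_num
      · simp [wG]
    rw [Finset.sum_congr rfl step, Finset.sum_ite, Finset.sum_const, Finset.sum_const_zero,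
      add_zero, nsmul_eq_mul]
    have hcard : (B.filter (fun b => b.isLeft ≠ a.isLeft)).card
        = (B.filter (fun x => x.isLeft = true)).card := by
      rcases ha' : a.isLeft with _ | _
      · rw [show (B.filter (fun b : Fin n ⊕ Fin n => b.isLeft ≠ false))
            = (B.filter (fun x => x.isLeft = true)) by ext x; simp]
      · rw [show (B.filter (fun b : Fin n ⊕ Fin n => b.isLeft ≠ true))
            = (B.filter (fun x => x.isLeft = false)) by ext x; simp]
        exact (half hB).symm
    rw [hcard]
    have h2 := two_half hB
    have : ((2 * (B.filter (fun x => x.isLeft = true)).card : ℕ) : ℝ) = (B.card : ℝ) := by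
      rw [h2]
    push_cast at this
    linarith
  rw [Finset.sum_congr rfl inner, Finset.sum_const, nsmul_eq_mul]

lemma mem_subtrees_node_iff {V : Type*} {s l r : HC V} :
    s ∈ (node l r).subtreesList ↔ s = node l r ∨ s ∈ l.subtreesList ∨ s ∈ r.subtreesList := by
  simp [subtreesList]

lemma key (n : ℕ) (t : HC (Fin n ⊕ Fin n)) :
    t.leafList.Nodup →
    (∀ i, Sum.inl i ∈ t.leaves ↔ Sum.inr i ∈ t.leaves) →
    (∀ i : Fin n, Sum.inl i ∈ t.leaves →
      HC.node (HC.leaf (Sum.inl i)) (HC.leaf (Sum.inr i)) ∈ t.subtreesList ∨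
      HC.node (HC.leaf (Sum.inr i)) (HC.leaf (Sum.inl i)) ∈ t.subtreesList) →
    internalSum (fun A B => (((A ∪ B).card : ℝ)) * ∑ a ∈ A, ∑ b ∈ B, (wG n a b + wG n b a)) t
      = ((t.leaves.card : ℝ)^3 - 4 * t.leaves.card)/3 := by
  induction t with
  | leaf v =>
    intro _ hpair _
    exfalso
    rcases v with i | i
    · have := (hpair i).1 (by simp [leaves, leafList])
      simp [leaves, leafList] at this
    · have := (hpair i).2 (by simp [leaves, leafList])
      simp [leaves, leafList] at this
  | node l r ihl ihr =>
    intro hnd hpair hch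
    obtain ⟨hl, hr, hdis⟩ := nodup_parts hnd
    -- the vertex of any leaf child pins down the whole node as a cherry
    rcases l with v | ⟨l1, l2⟩
    · -- left child is a leaf
      have hv : ∃ i, (v = Sum.inl i ∨ v = Sum.inr i) ∧
          (HC.node (HC.leaf (Sum.inl i)) (HC.leaf (Sum.inr i)) ∈ (node (leaf v) r).subtreesList ∨
           HC.node (HC.leaf (Sum.inr i)) (HC.leaf (Sum.inl i)) ∈ (node (leaf v) r).subtreesList) := by
        rcases v with i | i
        · exact ⟨i, Or.inl rfl, hch i (by simp [leaves_node', leaves_leaf])⟩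
        · refine ⟨i, Or.inr rfl, hch i ?_⟩
          exact (hpair i).2 (by simp [leaves_node', leaves_leaf])
      obtain ⟨i, hvi, hc⟩ := hv
      -- in all cases the cherry contains v, and membership forces cherry = node (leaf v) r
      have hrleaf : r = leaf (Sum.inl i) ∨ r = leaf (Sum.inr i) := by
        rcases hc with hc | hc <;>
          rw [mem_subtrees_node_iff] at hc <;>
          rcases hc with hc | hc | hc
        · obtain ⟨h1, h2⟩ := HC.node.inj hc.symm
          exact Or.inr h2
        · simp [subtreesList] at hc
        · exfalso
          have hsub := leaves_subset_of_mem_subtrees hc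
          have : v ∈ r.leaves := by
            apply hsub
            rcases hvi with rfl | rfl <;> simp [leaves_node', leaves_leaf]
          exact Finset.disjoint_left.mp hdis (by simp [leaves_leaf]) this
        · obtain ⟨h1, h2⟩ := HC.node.inj hc.symm
          exact Or.inl h2
        · simp [subtreesList] at hc
        · exfalso
          have hsub := leaves_subset_of_mem_subtrees hc
          have : v ∈ r.leaves := by
            apply hsub
            rcases hvi with rfl | rfl <;> simp [leaves_node', leaves_leaf]
          exact Finset.disjoint_left.mp hdis (by simp [leaves_leaf]) this
      -- moreover v is the partner of the leaf of r
      have hvval : (r = leaf (Sum.inl i) ∧ v = Sum.inr i) ∨ (r = leaf (Sum.inr i) ∧ v = Sum.inl i) := by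
        rcases hrleaf with hrl | hrl <;> subst hrl <;> rcases hvi with rfl | rfl
        · exfalso
          have : Sum.inl i ∈ (leaf (Sum.inl i) : HC (Fin n ⊕ Fin n)).leaves := by simp [leaves_leaf]
          exact Finset.disjoint_left.mp hdis (by simp [leaves_leaf]) this
        · exact Or.inl ⟨rfl, rfl⟩
        · exact Or.inr ⟨rfl, rfl⟩
        · exfalso
          have : Sum.inr i ∈ (leaf (Sum.inr i) : HC (Fin n ⊕ Fin n)).leaves := by simp [leaves_leaf]
          exact Finset.disjoint_left.mp hdis (by simp [leaves_leaf]) this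
      rcases hvval with ⟨hrl, hvl⟩ | ⟨hrl, hvl⟩ <;> subst hrl <;> subst hvl <;>
        · simp [internalSum, leaves, leafList, wG]
          norm_num
    · rcases r with v | ⟨r1, r2⟩
      · -- right child is a leaf: symmetric, must be impossible since left is a node
        exfalso
        have hv : ∃ i, (v = Sum.inl i ∨ v = Sum.inr i) ∧
            (HC.node (HC.leaf (Sum.inl i)) (HC.leaf (Sum.inr i)) ∈ (node (node l1 l2) (leaf v)).subtreesList ∨
             HC.node (HC.leaf (Sum.inr i)) (HC.leaf (Sum.inl i)) ∈ (node (node l1 l2) (leaf v)).subtreesList) := by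
          rcases v with i | i
          · refine ⟨i, Or.inl rfl, hch i ?_⟩
            simp [leaves_node', leaves_leaf]
          · refine ⟨i, Or.inr rfl, hch i ?_⟩
            exact (hpair i).2 (by simp [leaves_node', leaves_leaf])
        obtain ⟨i, hvi, hc⟩ := hv
        rcases hc with hc | hc <;>
          rw [mem_subtrees_node_iff] at hc <;>
          rcases hc with hc | hc | hc
        · obtain ⟨h1, h2⟩ := HC.node.inj hc.symm
          exact absurd h1 (by simp)
        · have hsub := leaves_subset_of_mem_subtrees hc
          have : v ∈ (node l1 l2).leaves := by
            apply hsub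
            rcases hvi with rfl | rfl <;> simp [leaves_node', leaves_leaf]
          exact Finset.disjoint_left.mp hdis this (by simp [leaves_leaf])
        · simp [subtreesList] at hc
        · obtain ⟨h1, h2⟩ := HC.node.inj hc.symm
          exact absurd h1 (by simp)
        · have hsub := leaves_subset_of_mem_subtrees hc
          have : v ∈ (node l1 l2).leaves := by
            apply hsub
            rcases hvi with rfl | rfl <;> simp [leaves_node', leaves_leaf]
          exact Finset.disjoint_left.mp hdis this (by simp [leaves_leaf])
        · simp [subtreesList] at hc
      · -- both children are nodes
        set L := node l1 l2 with hL
        set R := node r1 r2 with hR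
        clear_value L R
        have main : ∀ (i : Fin n), (Sum.inl i ∈ L.leaves ∨ Sum.inr i ∈ L.leaves) →
            ((HC.node (HC.leaf (Sum.inl i)) (HC.leaf (Sum.inr i)) ∈ L.subtreesList ∨
              HC.node (HC.leaf (Sum.inr i)) (HC.leaf (Sum.inl i)) ∈ L.subtreesList) ∧
             Sum.inl i ∈ L.leaves ∧ Sum.inr i ∈ L.leaves) := by
          intro i hi
          have hx : Sum.inl i ∈ (node L R).leaves := by
            rcases hi with h | h
            · rw [leaves_node']; exact Finset.mem_union_left _ h
            · exact (hpair i).2 (by rw [leaves_node']; exact Finset.mem_union_left _ h)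
          obtain hc | hc := hch i hx <;>
            rw [mem_subtrees_node_iff] at hc <;>
            rcases hc with hc | hc | hc
          · obtain ⟨h1, h2⟩ := HC.node.inj hc.symm
            exact absurd h1 (by simp [hL])
          · have hsub := leaves_subset_of_mem_subtrees hc
            exact ⟨Or.inl hc, hsub (by simp [leaves_node', leaves_leaf]),
              hsub (by simp [leaves_node', leaves_leaf])⟩
          · exfalso
            have hsub := leaves_subset_of_mem_subtrees hc
            rcases hi with h | h
            · exact Finset.disjoint_left.mp hdis h (hsub (by simp [leaves_node', leaves_leaf]))
            · exact Finset.disjoint_left.mp hdis h (hsub (by simp [leaves_node', leaves_leaf]))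
          · obtain ⟨h1, h2⟩ := HC.node.inj hc.symm
            exact absurd h1 (by simp [hL])
          · have hsub := leaves_subset_of_mem_subtrees hc
            exact ⟨Or.inr hc, hsub (by simp [leaves_node', leaves_leaf]),
              hsub (by simp [leaves_node', leaves_leaf])⟩
          · exfalso
            have hsub := leaves_subset_of_mem_subtrees hc
            rcases hi with h | h
            · exact Finset.disjoint_left.mp hdis h (hsub (by simp [leaves_node', leaves_leaf]))
            · exact Finset.disjoint_left.mp hdis h (hsub (by simp [leaves_node', leaves_leaf]))
        have mainR : ∀ (i : Fin n), (Sum.inl i ∈ R.leaves ∨ Sum.inr i ∈ R.leaves) →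
            ((HC.node (HC.leaf (Sum.inl i)) (HC.leaf (Sum.inr i)) ∈ R.subtreesList ∨
              HC.node (HC.leaf (Sum.inr i)) (HC.leaf (Sum.inl i)) ∈ R.subtreesList) ∧
             Sum.inl i ∈ R.leaves ∧ Sum.inr i ∈ R.leaves) := by
          intro i hi
          have hx : Sum.inl i ∈ (node L R).leaves := by
            rcases hi with h | h
            · rw [leaves_node']; exact Finset.mem_union_right _ h
            · exact (hpair i).2 (by rw [leaves_node']; exact Finset.mem_union_right _ h)
          obtain hc | hc := hch i hx <;>
            rw [mem_subtrees_node_iff] at hc <;>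
            rcases hc with hc | hc | hc
          · obtain ⟨h1, h2⟩ := HC.node.inj hc.symm
            exact absurd h1 (by simp [hL])
          · exfalso
            have hsub := leaves_subset_of_mem_subtrees hc
            rcases hi with h | h
            · exact Finset.disjoint_left.mp hdis (hsub (by simp [leaves_node', leaves_leaf])) h
            · exact Finset.disjoint_left.mp hdis (hsub (by simp [leaves_node', leaves_leaf])) h
          · have hsub := leaves_subset_of_mem_subtrees hc
            exact ⟨Or.inl hc, hsub (by simp [leaves_node', leaves_leaf]),
              hsub (by simp [leaves_node', leaves_leaf])⟩
          · obtain ⟨h1, h2⟩ := HC.node.inj hc.symm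
            exact absurd h1 (by simp [hL])
          · exfalso
            have hsub := leaves_subset_of_mem_subtrees hc
            rcases hi with h | h
            · exact Finset.disjoint_left.mp hdis (hsub (by simp [leaves_node', leaves_leaf])) h
            · exact Finset.disjoint_left.mp hdis (hsub (by simp [leaves_node', leaves_leaf])) h
          · have hsub := leaves_subset_of_mem_subtrees hc
            exact ⟨Or.inr hc, hsub (by simp [leaves_node', leaves_leaf]),
              hsub (by simp [leaves_node', leaves_leaf])⟩
        have pairedL : ∀ i, Sum.inl i ∈ L.leaves ↔ Sum.inr i ∈ L.leaves := fun i =>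
          ⟨fun h => (main i (Or.inl h)).2.2, fun h => (main i (Or.inr h)).2.1⟩
        have pairedR : ∀ i, Sum.inl i ∈ R.leaves ↔ Sum.inr i ∈ R.leaves := fun i =>
          ⟨fun h => (mainR i (Or.inl h)).2.2, fun h => (mainR i (Or.inr h)).2.1⟩
        have cherryL : ∀ i : Fin n, Sum.inl i ∈ L.leaves →
            HC.node (HC.leaf (Sum.inl i)) (HC.leaf (Sum.inr i)) ∈ L.subtreesList ∨
            HC.node (HC.leaf (Sum.inr i)) (HC.leaf (Sum.inl i)) ∈ L.subtreesList :=
          fun i h => (main i (Or.inl h)).1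
        have cherryR : ∀ i : Fin n, Sum.inl i ∈ R.leaves →
            HC.node (HC.leaf (Sum.inl i)) (HC.leaf (Sum.inr i)) ∈ R.subtreesList ∨
            HC.node (HC.leaf (Sum.inr i)) (HC.leaf (Sum.inl i)) ∈ R.subtreesList :=
          fun i h => (mainR i (Or.inl h)).1
        rw [internalSum]
        rw [ihl hl pairedL cherryL, ihr hr pairedR cherryR]
        rw [cut_eq pairedR hdis]
        rw [leaves_node', Finset.card_union_of_disjoint hdis]
        push_cast
        ring

end HC

/-- On the graph `G_n`, every hierarchical clustering tree in which, for each `i`, the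
leaves `a_i` and `b_i` are the two children of a common internal node has value
`(4/3)·(n³ − n)`. -/
theorem stmt12 (n : ℕ) (hn : 1 ≤ n)
    (t : HC (Fin n ⊕ Fin n)) (ht : t.IsTreeOn) (hp : pairCond n t) :
    HC.val (wG n) t = (4 / 3) * ((n : ℝ) ^ 3 - (n : ℝ)) := by
  obtain ⟨hnd, huniv⟩ := ht
  have hpair : ∀ i, Sum.inl i ∈ t.leaves ↔ Sum.inr i ∈ t.leaves := by
    simp [huniv]
  have hch : ∀ i : Fin n, Sum.inl i ∈ t.leaves →
      HC.node (HC.leaf (Sum.inl i)) (HC.leaf (Sum.inr i)) ∈ t.subtreesList ∨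
      HC.node (HC.leaf (Sum.inr i)) (HC.leaf (Sum.inl i)) ∈ t.subtreesList :=
    fun i _ => hp i
  have h1 := HC.cluster_sum (wG n) t hnd
  have h2 := HC.key n t hnd hpair hch
  rw [HC.val, HC.cost, ← huniv, h1, h2, huniv, Finset.card_univ]
  simp only [Fintype.card_sum, Fintype.card_fin]
  push_cast
  ring
end

section
/- Fix n ≥ 2 and let G_n be the weighted graph with vertex set {a_1,…,a_n, b_1,…,b_n} and weights w(a_i,b_j) = 1 for all i ≠ j and weight 0 on all other unordered pairs. Then there exists a hierarchical clustering tree T' on G_n such that every hierarchical clustering tree T in which, for each i, the leaves a_i and b_i are the two children of a common internal node satisfies val(T) ≤ (2(n+1)/(3n))·val(T'). -/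
open Finset

section Aux

open HC

variable {V : Type*} [DecidableEq V]

lemma leaves_node (l r : HC V) : (HC.node l r).leaves = l.leaves ∪ r.leaves := by
  simp [HC.leaves, HC.leafList]

lemma subtree_leaves_subset : ∀ (t s : HC V), s ∈ t.subtreesList → s.leaves ⊆ t.leaves := by
  intro t
  induction t with
  | leaf v =>
    intro s hs
    simp [HC.subtreesList] at hs
    subst hs; exact subset_rfl
  | node l r ihl ihr =>
    intro s hs
    simp only [HC.subtreesList, List.mem_cons, List.mem_append] at hs
    rcases hs with h | h | h
    · subst h; exact subset_rfl
    · exact (ihl s h).trans (by rw [leaves_node]; exact Finset.subset_union_left)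
    · exact (ihr s h).trans (by rw [leaves_node]; exact Finset.subset_union_right)

lemma nodup_node {l r : HC V} (h : (HC.node l r).leafList.Nodup) :
    l.leafList.Nodup ∧ r.leafList.Nodup ∧ Disjoint l.leaves r.leaves := by
  rw [show (HC.node l r).leafList = l.leafList ++ r.leafList from rfl, List.nodup_append] at h
  refine ⟨h.1, h.2.1, ?_⟩
  rw [Finset.disjoint_left]
  intro a ha hb
  simp only [HC.leaves, List.mem_toFinset] at ha hb
  exact h.2.2 a ha a hb rfl

lemma cluster_left {l r : HC V} {i j : V} (hi : i ∈ l.leaves) (hj : j ∈ l.leaves) :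
    (HC.node l r).cluster i j = l.cluster i j := by
  simp [HC.cluster, hi, hj]

lemma cluster_right {l r : HC V} {i j : V} (hd : Disjoint l.leaves r.leaves)
    (hi : i ∈ r.leaves) (hj : j ∈ r.leaves) :
    (HC.node l r).cluster i j = r.cluster i j := by
  have h1 : i ∉ l.leaves := fun h => (Finset.disjoint_left.mp hd h) hi
  simp [HC.cluster, h1, hi, hj]

lemma cluster_cross {l r : HC V} {i j : V} (hd : Disjoint l.leaves r.leaves)
    (hi : i ∈ l.leaves) (hj : j ∈ r.leaves) :
    (HC.node l r).cluster i j = (HC.node l r).leaves := by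
  have h1 : j ∉ l.leaves := fun h => (Finset.disjoint_left.mp hd h) hj
  have h2 : i ∉ r.leaves := fun h => (Finset.disjoint_left.mp hd hi) h
  simp [HC.cluster, h1, h2]

lemma cluster_cross' {l r : HC V} {i j : V} (hd : Disjoint l.leaves r.leaves)
    (hi : i ∈ r.leaves) (hj : j ∈ l.leaves) :
    (HC.node l r).cluster i j = (HC.node l r).leaves := by
  have h1 : i ∉ l.leaves := fun h => (Finset.disjoint_left.mp hd h) hi
  have h2 : j ∉ r.leaves := fun h => (Finset.disjoint_left.mp hd hj) h
  simp [HC.cluster, h1, h2]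

lemma sum_offDiag_union {α : Type*} [DecidableEq α] {A B : Finset α} (hd : Disjoint A B)
    (f : α × α → ℝ) :
    ∑ p ∈ (A ∪ B).offDiag, f p =
      ∑ p ∈ A.offDiag, f p + ∑ p ∈ B.offDiag, f p
        + ∑ p ∈ A ×ˢ B, f p + ∑ p ∈ B ×ˢ A, f p := by
  have d1 : Disjoint A.offDiag B.offDiag := by
    rw [Finset.disjoint_left]
    rintro p hp hq
    rw [Finset.mem_offDiag] at hp hq
    exact (Finset.disjoint_left.mp hd hp.1) hq.1
  have d2 : Disjoint (A.offDiag ∪ B.offDiag) (A ×ˢ B) := by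
    rw [Finset.disjoint_left]
    rintro p hp hq
    rw [Finset.mem_product] at hq
    rcases Finset.mem_union.mp hp with h | h <;> rw [Finset.mem_offDiag] at h
    · exact (Finset.disjoint_left.mp hd h.2.1) hq.2
    · exact (Finset.disjoint_left.mp hd hq.1) h.1
  have d3 : Disjoint (A.offDiag ∪ B.offDiag ∪ A ×ˢ B) (B ×ˢ A) := by
    rw [Finset.disjoint_left]
    rintro p hp hq
    rw [Finset.mem_product] at hq
    rcases Finset.mem_union.mp hp with h | h
    · rcases Finset.mem_union.mp h with h' | h' <;> rw [Finset.mem_offDiag] at h'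
      · exact (Finset.disjoint_left.mp hd h'.1) hq.1
      · exact (Finset.disjoint_left.mp hd hq.2) h'.2.1
    · rw [Finset.mem_product] at h
      exact (Finset.disjoint_left.mp hd h.1) hq.1
  rw [Finset.offDiag_union hd, Finset.sum_union d3, Finset.sum_union d2, Finset.sum_union d1]

end Aux

section Aux2

open HC Finset

/-- number of matched pairs inside the leaves of `t` -/
def pcnt (n : ℕ) (t : HC (Fin n ⊕ Fin n)) : ℕ :=
  (Finset.univ.filter (fun i : Fin n => Sum.inl i ∈ t.leaves)).card

lemma leaves_eq_pairs {n : ℕ} (t : HC (Fin n ⊕ Fin n))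
    (h2 : ∀ i : Fin n, Sum.inl i ∈ t.leaves ↔ Sum.inr i ∈ t.leaves) :
    t.leaves = (Finset.univ.filter (fun i : Fin n => Sum.inl i ∈ t.leaves)).image Sum.inl
      ∪ (Finset.univ.filter (fun i : Fin n => Sum.inl i ∈ t.leaves)).image Sum.inr := by
  ext x
  cases x with
  | inl i => simp
  | inr i => simp [← h2 i]

lemma card_pairs {n : ℕ} (I : Finset (Fin n)) :
    (I.image Sum.inl ∪ I.image Sum.inr : Finset (Fin n ⊕ Fin n)).card = 2 * I.card := by
  rw [Finset.card_union_of_disjoint, Finset.card_image_of_injective _ Sum.inl_injective,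
    Finset.card_image_of_injective _ Sum.inr_injective]
  · ring
  · rw [Finset.disjoint_left]
    rintro x hx hy
    simp only [Finset.mem_image] at hx hy
    obtain ⟨a, _, rfl⟩ := hx
    obtain ⟨b, _, hb⟩ := hy
    exact nomatch hb

lemma cross_sum {n : ℕ} (I₁ I₂ : Finset (Fin n)) (hd : Disjoint I₁ I₂) :
    ∑ a ∈ (I₁.image Sum.inl ∪ I₁.image Sum.inr), ∑ b ∈ (I₂.image Sum.inl ∪ I₂.image Sum.inr),
      wG n a b = 2 * I₁.card * I₂.card := by
  have hne : ∀ i ∈ I₁, ∀ j ∈ I₂, i ≠ j := by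
    intro i hi j hj h; subst h; exact (Finset.disjoint_left.mp hd hi) hj
  have inner : ∀ a : Fin n ⊕ Fin n,
      (∀ j ∈ I₂, wG n a (Sum.inl j) + wG n a (Sum.inr j) = 1) →
      ∑ b ∈ (I₂.image Sum.inl ∪ I₂.image Sum.inr), wG n a b = I₂.card := by
    intro a ha
    rw [Finset.sum_union, Finset.sum_image (fun x _ y _ h => Sum.inl_injective h),
      Finset.sum_image (fun x _ y _ h => Sum.inr_injective h), ← Finset.sum_add_distrib]
    · rw [Finset.sum_congr rfl ha, Finset.sum_const, nsmul_eq_mul, mul_one]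
    · rw [Finset.disjoint_left]
      rintro x hx hy
      simp only [Finset.mem_image] at hx hy
      obtain ⟨c, _, rfl⟩ := hx
      obtain ⟨b, _, hb⟩ := hy
      exact nomatch hb
  rw [Finset.sum_union, Finset.sum_image (fun x _ y _ h => Sum.inl_injective h),
    Finset.sum_image (fun x _ y _ h => Sum.inr_injective h)]
  · have e1 : ∀ i ∈ I₁, ∑ b ∈ (I₂.image Sum.inl ∪ I₂.image Sum.inr), wG n (Sum.inl i) b
        = I₂.card := by
      intro i hi
      refine inner _ (fun j hj => ?_)
      simp [wG, hne i hi j hj]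
    have e2 : ∀ i ∈ I₁, ∑ b ∈ (I₂.image Sum.inl ∪ I₂.image Sum.inr), wG n (Sum.inr i) b
        = I₂.card := by
      intro i hi
      refine inner _ (fun j hj => ?_)
      simp [wG, hne i hi j hj]
    rw [Finset.sum_congr rfl e1, Finset.sum_congr rfl e2]
    simp only [Finset.sum_const, nsmul_eq_mul]
    push_cast
    ring
  · rw [Finset.disjoint_left]
    rintro x hx hy
    simp only [Finset.mem_image] at hx hy
    obtain ⟨c, _, rfl⟩ := hx
    obtain ⟨b, _, hb⟩ := hy
    exact nomatch hb

end Aux2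

section Aux3

open HC Finset

lemma wG_self {n : ℕ} (x : Fin n ⊕ Fin n) : wG n x x = 0 := by
  cases x <;> simp [wG]

lemma cherry_mem {V : Type*} [DecidableEq V] {u v : V} {s : HC V}
    (h : HC.node (HC.leaf u) (HC.leaf v) ∈ s.subtreesList) :
    u ∈ s.leaves ∧ v ∈ s.leaves :=
  ⟨subtree_leaves_subset s _ h (by simp [HC.leaves, HC.leafList]),
   subtree_leaves_subset s _ h (by simp [HC.leaves, HC.leafList])⟩

lemma key (n : ℕ) : ∀ t : HC (Fin n ⊕ Fin n),
    t.leafList.Nodup →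
    (∀ i : Fin n, Sum.inl i ∈ t.leaves ↔ Sum.inr i ∈ t.leaves) →
    (∀ i : Fin n, Sum.inl i ∈ t.leaves →
      (HC.node (HC.leaf (Sum.inl i)) (HC.leaf (Sum.inr i)) ∈ t.subtreesList ∨
       HC.node (HC.leaf (Sum.inr i)) (HC.leaf (Sum.inl i)) ∈ t.subtreesList)) →
    t.leaves.card = 2 * pcnt n t ∧
    ∑ p ∈ t.leaves.offDiag, wG n p.1 p.2 * ((t.cluster p.1 p.2).card : ℝ)
      = 8 * ((pcnt n t : ℝ) ^ 3 - (pcnt n t : ℝ)) / 3 := by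
  intro t
  induction t with
  | leaf v =>
    intro _ h2 _
    exfalso
    cases v with
    | inl i =>
      have := (h2 i).mp (by simp [HC.leaves, HC.leafList])
      simp [HC.leaves, HC.leafList] at this
    | inr i =>
      have := (h2 i).mpr (by simp [HC.leaves, HC.leafList])
      simp [HC.leaves, HC.leafList] at this
  | node l r ihl ihr =>
    intro h1 h2 h3
    obtain ⟨hln, hrn, hdis⟩ := nodup_node h1
    cases l with
    | leaf x =>
      -- t must be a cherry
      have hcherry : (∃ i : Fin n, x = Sum.inl i ∧ r = HC.leaf (Sum.inr i)) ∨
          (∃ i : Fin n, x = Sum.inr i ∧ r = HC.leaf (Sum.inl i)) := by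
        have hxl : x ∈ (HC.leaf x : HC (Fin n ⊕ Fin n)).leaves := by
          simp [HC.leaves, HC.leafList]
        cases x with
        | inl i =>
          left
          refine ⟨i, rfl, ?_⟩
          have hmem : Sum.inl i ∈ (HC.node (HC.leaf (Sum.inl i)) r).leaves := by
            rw [leaves_node]; exact Finset.mem_union_left _ hxl
          rcases h3 i hmem with hc | hc <;>
            simp only [HC.subtreesList, List.mem_cons, List.mem_append,
              List.mem_singleton] at hc
          · rcases hc with heq | heq | hmem' 
            · injection heq with ha hb; exact hb.symm
            · rcases heq with heq | heq
              · exact nomatch heq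
              · simp at heq
            · exfalso
              exact (Finset.disjoint_left.mp hdis hxl) (cherry_mem hmem').1
          · rcases hc with heq | heq | hmem'
            · injection heq with ha hb; exact nomatch ha
            · rcases heq with heq | heq
              · exact nomatch heq
              · simp at heq
            · exfalso
              exact (Finset.disjoint_left.mp hdis hxl) (cherry_mem hmem').2
        | inr i =>
          right
          refine ⟨i, rfl, ?_⟩
          have hmem' : Sum.inr i ∈ (HC.node (HC.leaf (Sum.inr i)) r).leaves := by
            rw [leaves_node]; exact Finset.mem_union_left _ hxl
          have hmem : Sum.inl i ∈ (HC.node (HC.leaf (Sum.inr i)) r).leaves :=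
            (h2 i).mpr hmem'
          rcases h3 i hmem with hc | hc <;>
            simp only [HC.subtreesList, List.mem_cons, List.mem_append,
              List.mem_singleton] at hc
          · rcases hc with heq | heq | hmem''
            · injection heq with ha hb; exact nomatch ha
            · rcases heq with heq | heq
              · exact nomatch heq
              · simp at heq
            · exfalso
              exact (Finset.disjoint_left.mp hdis hxl) (cherry_mem hmem'').2
          · rcases hc with heq | heq | hmem''
            · injection heq with ha hb; exact hb.symm
            · rcases heq with heq | heq
              · exact nomatch heq
              · simp at heq
            · exfalso
              exact (Finset.disjoint_left.mp hdis hxl) (cherry_mem hmem'').1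
      -- evaluate the cherry
      rcases hcherry with ⟨i, rfl, rfl⟩ | ⟨i, rfl, rfl⟩
      all_goals {
        have hleq : (HC.node (HC.leaf (Sum.inl i)) (HC.leaf (Sum.inr i))).leaves
            = {Sum.inl i, Sum.inr i} ∧
            (HC.node (HC.leaf (Sum.inr i)) (HC.leaf (Sum.inl i))).leaves
            = {Sum.inr i, Sum.inl i} := by
          constructor <;> simp [HC.leaves, HC.leafList] <;> rfl
        have hpc1 : pcnt n (HC.node (HC.leaf (Sum.inl i)) (HC.leaf (Sum.inr i))) = 1 := by
          unfold pcnt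
          rw [show (Finset.univ.filter
              (fun j : Fin n => Sum.inl j ∈ (HC.node (HC.leaf (Sum.inl i)) (HC.leaf (Sum.inr i))).leaves)) = {i} from by
            ext j; simp [HC.leaves, HC.leafList]]
          simp
        have hpc2 : pcnt n (HC.node (HC.leaf (Sum.inr i)) (HC.leaf (Sum.inl i))) = 1 := by
          unfold pcnt
          rw [show (Finset.univ.filter
              (fun j : Fin n => Sum.inl j ∈ (HC.node (HC.leaf (Sum.inr i)) (HC.leaf (Sum.inl i))).leaves)) = {i} from by
            ext j; simp [HC.leaves, HC.leafList]]
          simp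
        constructor
        · first
          | (rw [hpc1]; simp [HC.leaves, HC.leafList])
          | (rw [hpc2]; simp [HC.leaves, HC.leafList])
        · have hz : ∀ p ∈ (({Sum.inl i, Sum.inr i} : Finset (Fin n ⊕ Fin n)).offDiag),
              wG n p.1 p.2 * (((HC.node (HC.leaf (Sum.inl i)) (HC.leaf (Sum.inr i))).cluster p.1 p.2).card : ℝ) = 0 := by
            intro p hp
            rw [Finset.mem_offDiag] at hp
            obtain ⟨ha, hb, hab⟩ := hp
            simp only [Finset.mem_insert, Finset.mem_singleton] at ha hb
            rcases ha with ha | ha <;> rcases hb with hb | hb <;>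
              (try (exfalso; rw [ha, hb] at hab; exact hab rfl)) <;>
              rw [ha, hb] <;> simp [wG]
          have hz' : ∀ p ∈ (({Sum.inr i, Sum.inl i} : Finset (Fin n ⊕ Fin n)).offDiag),
              wG n p.1 p.2 * (((HC.node (HC.leaf (Sum.inr i)) (HC.leaf (Sum.inl i))).cluster p.1 p.2).card : ℝ) = 0 := by
            intro p hp
            rw [Finset.mem_offDiag] at hp
            obtain ⟨ha, hb, hab⟩ := hp
            simp only [Finset.mem_insert, Finset.mem_singleton] at ha hb
            rcases ha with ha | ha <;> rcases hb with hb | hb <;>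
              (try (exfalso; rw [ha, hb] at hab; exact hab rfl)) <;>
              rw [ha, hb] <;> simp [wG]
          first
          | (rw [hpc1, hleq.1, Finset.sum_eq_zero hz]; norm_num)
          | (rw [hpc2, hleq.2, Finset.sum_eq_zero hz']; norm_num)
      }
    | node l1 l2 =>
      -- main case: left child is an internal node
      have hnotch : ∀ s1 s2 : Fin n ⊕ Fin n,
          ¬ (HC.node (HC.leaf s1) (HC.leaf s2) = HC.node (HC.node l1 l2) r) := by
        intro s1 s2 h
        injection h with ha hb
        exact nomatch ha
      have hsplit : ∀ i : Fin n, Sum.inl i ∈ (HC.node (HC.node l1 l2) r).leaves →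
          (Sum.inl i ∈ (HC.node l1 l2).leaves ∧ Sum.inr i ∈ (HC.node l1 l2).leaves ∧
            (HC.node (HC.leaf (Sum.inl i)) (HC.leaf (Sum.inr i)) ∈ (HC.node l1 l2).subtreesList ∨
             HC.node (HC.leaf (Sum.inr i)) (HC.leaf (Sum.inl i)) ∈ (HC.node l1 l2).subtreesList)) ∨
          (Sum.inl i ∈ r.leaves ∧ Sum.inr i ∈ r.leaves ∧
            (HC.node (HC.leaf (Sum.inl i)) (HC.leaf (Sum.inr i)) ∈ r.subtreesList ∨
             HC.node (HC.leaf (Sum.inr i)) (HC.leaf (Sum.inl i)) ∈ r.subtreesList)) := by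
        intro i hi
        rcases h3 i hi with hc | hc <;>
          rw [show (HC.node (HC.node l1 l2) r).subtreesList
              = HC.node (HC.node l1 l2) r :: ((HC.node l1 l2).subtreesList ++ r.subtreesList)
              from rfl, List.mem_cons, List.mem_append] at hc
        · rcases hc with heq | h | h
          · exact absurd heq (hnotch _ _)
          · exact Or.inl ⟨(cherry_mem h).1, (cherry_mem h).2, Or.inl h⟩
          · exact Or.inr ⟨(cherry_mem h).1, (cherry_mem h).2, Or.inl h⟩
        · rcases hc with heq | h | h
          · exact absurd heq (hnotch _ _)
          · exact Or.inl ⟨(cherry_mem h).2, (cherry_mem h).1, Or.inr h⟩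
          · exact Or.inr ⟨(cherry_mem h).2, (cherry_mem h).1, Or.inr h⟩
      have h2L : ∀ i : Fin n, Sum.inl i ∈ (HC.node l1 l2).leaves ↔
          Sum.inr i ∈ (HC.node l1 l2).leaves := by
        intro i
        constructor
        · intro h
          have hi : Sum.inl i ∈ (HC.node (HC.node l1 l2) r).leaves := by
            rw [leaves_node]; exact Finset.mem_union_left _ h
          rcases hsplit i hi with ⟨_, h', _⟩ | ⟨h', _, _⟩
          · exact h'
          · exact absurd h (Finset.disjoint_right.mp hdis h')
        · intro h
          have hi' : Sum.inr i ∈ (HC.node (HC.node l1 l2) r).leaves := by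
            rw [leaves_node]; exact Finset.mem_union_left _ h
          rcases hsplit i ((h2 i).mpr hi') with ⟨h', _, _⟩ | ⟨_, h', _⟩
          · exact h'
          · exact absurd h (Finset.disjoint_right.mp hdis h')
      have h3L : ∀ i : Fin n, Sum.inl i ∈ (HC.node l1 l2).leaves →
          (HC.node (HC.leaf (Sum.inl i)) (HC.leaf (Sum.inr i)) ∈ (HC.node l1 l2).subtreesList ∨
           HC.node (HC.leaf (Sum.inr i)) (HC.leaf (Sum.inl i)) ∈ (HC.node l1 l2).subtreesList) := by
        intro i h
        have hi : Sum.inl i ∈ (HC.node (HC.node l1 l2) r).leaves := by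
          rw [leaves_node]; exact Finset.mem_union_left _ h
        rcases hsplit i hi with ⟨_, _, hc⟩ | ⟨h', _, _⟩
        · exact hc
        · exact absurd h (Finset.disjoint_right.mp hdis h')
      have h2R : ∀ i : Fin n, Sum.inl i ∈ r.leaves ↔ Sum.inr i ∈ r.leaves := by
        intro i
        constructor
        · intro h
          have hi : Sum.inl i ∈ (HC.node (HC.node l1 l2) r).leaves := by
            rw [leaves_node]; exact Finset.mem_union_right _ h
          rcases hsplit i hi with ⟨h', _, _⟩ | ⟨_, h', _⟩
          · exact absurd h (Finset.disjoint_left.mp hdis h')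
          · exact h'
        · intro h
          have hi' : Sum.inr i ∈ (HC.node (HC.node l1 l2) r).leaves := by
            rw [leaves_node]; exact Finset.mem_union_right _ h
          rcases hsplit i ((h2 i).mpr hi') with ⟨_, h', _⟩ | ⟨h', _, _⟩
          · exact absurd h (Finset.disjoint_left.mp hdis h')
          · exact h'
      have h3R : ∀ i : Fin n, Sum.inl i ∈ r.leaves →
          (HC.node (HC.leaf (Sum.inl i)) (HC.leaf (Sum.inr i)) ∈ r.subtreesList ∨
           HC.node (HC.leaf (Sum.inr i)) (HC.leaf (Sum.inl i)) ∈ r.subtreesList) := by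
        intro i h
        have hi : Sum.inl i ∈ (HC.node (HC.node l1 l2) r).leaves := by
          rw [leaves_node]; exact Finset.mem_union_right _ h
        rcases hsplit i hi with ⟨h', _, _⟩ | ⟨_, _, hc⟩
        · exact absurd h (Finset.disjoint_left.mp hdis h')
        · exact hc
      obtain ⟨cardL, sumL⟩ := ihl hln h2L h3L
      obtain ⟨cardR, sumR⟩ := ihr hrn h2R h3R
      have hIdis : Disjoint
          (Finset.univ.filter (fun i : Fin n => Sum.inl i ∈ (HC.node l1 l2).leaves))
          (Finset.univ.filter (fun i : Fin n => Sum.inl i ∈ r.leaves)) := by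
        rw [Finset.disjoint_left]
        intro i hi hj
        simp only [Finset.mem_filter] at hi hj
        exact (Finset.disjoint_left.mp hdis hi.2) hj.2
      have hpcnt : pcnt n (HC.node (HC.node l1 l2) r)
          = pcnt n (HC.node l1 l2) + pcnt n r := by
        unfold pcnt
        rw [← Finset.card_union_of_disjoint hIdis, ← Finset.filter_or]
        congr 1
        apply Finset.filter_congr
        intro i _
        rw [leaves_node]
        exact Finset.mem_union
      have hcard : (HC.node (HC.node l1 l2) r).leaves.card
          = 2 * pcnt n (HC.node (HC.node l1 l2) r) := by
        rw [leaves_node, Finset.card_union_of_disjoint hdis, cardL, cardR, hpcnt]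
        ring
      refine ⟨hcard, ?_⟩
      rw [leaves_node, sum_offDiag_union hdis]
      have e1 : ∑ p ∈ (HC.node l1 l2).leaves.offDiag,
          wG n p.1 p.2 * (((HC.node (HC.node l1 l2) r).cluster p.1 p.2).card : ℝ)
          = 8 * ((pcnt n (HC.node l1 l2) : ℝ) ^ 3 - (pcnt n (HC.node l1 l2) : ℝ)) / 3 := by
        rw [← sumL]
        refine Finset.sum_congr rfl fun p hp => ?_
        rw [Finset.mem_offDiag] at hp
        rw [cluster_left hp.1 hp.2.1]
      have e2 : ∑ p ∈ r.leaves.offDiag,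
          wG n p.1 p.2 * (((HC.node (HC.node l1 l2) r).cluster p.1 p.2).card : ℝ)
          = 8 * ((pcnt n r : ℝ) ^ 3 - (pcnt n r : ℝ)) / 3 := by
        rw [← sumR]
        refine Finset.sum_congr rfl fun p hp => ?_
        rw [Finset.mem_offDiag] at hp
        rw [cluster_right hdis hp.1 hp.2.1]
      have e3 : ∑ p ∈ (HC.node l1 l2).leaves ×ˢ r.leaves,
          wG n p.1 p.2 * (((HC.node (HC.node l1 l2) r).cluster p.1 p.2).card : ℝ)
          = 2 * (pcnt n (HC.node l1 l2) : ℝ) * (pcnt n r : ℝ)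
              * (2 * ((pcnt n (HC.node l1 l2) : ℝ) + (pcnt n r : ℝ))) := by
        have step : ∀ p ∈ (HC.node l1 l2).leaves ×ˢ r.leaves,
            wG n p.1 p.2 * (((HC.node (HC.node l1 l2) r).cluster p.1 p.2).card : ℝ)
            = wG n p.1 p.2 * (2 * ((pcnt n (HC.node l1 l2) : ℝ) + (pcnt n r : ℝ))) := by
          intro p hp
          rw [Finset.mem_product] at hp
          rw [cluster_cross hdis hp.1 hp.2, hcard, hpcnt]
          push_cast
          ring
        rw [Finset.sum_congr rfl step, ← Finset.sum_mul, Finset.sum_product]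
        rw [leaves_eq_pairs _ h2L, leaves_eq_pairs _ h2R, cross_sum _ _ hIdis]
        rfl
      have e4 : ∑ p ∈ r.leaves ×ˢ (HC.node l1 l2).leaves,
          wG n p.1 p.2 * (((HC.node (HC.node l1 l2) r).cluster p.1 p.2).card : ℝ)
          = 2 * (pcnt n r : ℝ) * (pcnt n (HC.node l1 l2) : ℝ)
              * (2 * ((pcnt n (HC.node l1 l2) : ℝ) + (pcnt n r : ℝ))) := by
        have step : ∀ p ∈ r.leaves ×ˢ (HC.node l1 l2).leaves,
            wG n p.1 p.2 * (((HC.node (HC.node l1 l2) r).cluster p.1 p.2).card : ℝ)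
            = wG n p.1 p.2 * (2 * ((pcnt n (HC.node l1 l2) : ℝ) + (pcnt n r : ℝ))) := by
          intro p hp
          rw [Finset.mem_product] at hp
          rw [cluster_cross' hdis hp.1 hp.2, hcard, hpcnt]
          push_cast
          ring
        rw [Finset.sum_congr rfl step, ← Finset.sum_mul, Finset.sum_product]
        rw [leaves_eq_pairs _ h2R, leaves_eq_pairs _ h2L, cross_sum _ _ hIdis.symm]
        rfl
      rw [e1, e2, e3, e4, hpcnt]
      push_cast
      ring


end Aux3

section Aux4

open HC Finset

/-- caterpillar tree on a list of vertices (default `d` for the empty list) -/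
def ofList {V : Type*} (d : V) : List V → HC V
  | [] => HC.leaf d
  | [v] => HC.leaf v
  | v :: w :: l => HC.node (HC.leaf v) (ofList d (w :: l))

lemma ofList_leafList {V : Type*} (d : V) :
    ∀ l : List V, l ≠ [] → (ofList d l).leafList = l := by
  intro l
  induction l with
  | nil => simp
  | cons v l ih =>
    intro _
    cases l with
    | nil => simp [ofList, HC.leafList]
    | cons w l' =>
      show (HC.node (HC.leaf v) (ofList d (w :: l'))).leafList = v :: w :: l'
      rw [show (HC.node (HC.leaf v) (ofList d (w :: l'))).leafList
          = v :: (ofList d (w :: l')).leafList from rfl, ih (by simp)]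

lemma rowsum (n : ℕ) (i : Fin n) :
    ∑ j : Fin n, (if i = j then (0:ℝ) else 1) = (n : ℝ) - 1 := by
  have h : ∀ j : Fin n, (if i = j then (0:ℝ) else 1) = 1 - (if i = j then (1:ℝ) else 0) := by
    intro j; split <;> ring
  simp only [h]
  rw [Finset.sum_sub_distrib, Finset.sum_const, Finset.sum_ite_eq]
  simp

lemma total_w (n : ℕ) :
    ∑ p ∈ (Finset.univ : Finset (Fin n ⊕ Fin n)).offDiag, wG n p.1 p.2
      = 2 * (n : ℝ) * ((n : ℝ) - 1) := by
  have h0 : ∑ p ∈ (Finset.univ : Finset (Fin n ⊕ Fin n)).diag, wG n p.1 p.2 = 0 := by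
    refine Finset.sum_eq_zero fun p hp => ?_
    rw [Finset.mem_diag] at hp
    rw [← hp.2]
    exact wG_self _
  have h1 := Finset.sum_union (f := fun p : (Fin n ⊕ Fin n) × (Fin n ⊕ Fin n) => wG n p.1 p.2)
    (Finset.disjoint_diag_offDiag (Finset.univ : Finset (Fin n ⊕ Fin n)))
  rw [Finset.diag_union_offDiag, h0, zero_add] at h1
  rw [← h1, Finset.sum_product, Fintype.sum_sum_type]
  have hl : ∀ i : Fin n, ∑ y : Fin n ⊕ Fin n, wG n (Sum.inl i) y = (n : ℝ) - 1 := by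
    intro i
    rw [Fintype.sum_sum_type]
    have : ∀ j : Fin n, wG n (Sum.inl i) (Sum.inl j) = 0 := fun j => rfl
    simp only [this, Finset.sum_const, smul_zero, zero_add]
    have : ∀ j : Fin n, wG n (Sum.inl i) (Sum.inr j) = if i = j then (0:ℝ) else 1 :=
      fun j => rfl
    simp only [this]
    exact rowsum n i
  have hr : ∀ i : Fin n, ∑ y : Fin n ⊕ Fin n, wG n (Sum.inr i) y = (n : ℝ) - 1 := by
    intro i
    rw [Fintype.sum_sum_type]
    have h2 : ∀ j : Fin n, wG n (Sum.inr i) (Sum.inr j) = 0 := fun j => rfl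
    have h3 : ∀ j : Fin n, wG n (Sum.inr i) (Sum.inl j) = if i = j then (0:ℝ) else 1 :=
      fun j => rfl
    simp only [h2, h3, Finset.sum_const, smul_zero, add_zero]
    exact rowsum n i
  simp only [hl, hr, Finset.sum_const, Finset.card_univ, Fintype.card_fin, nsmul_eq_mul]
  ring

end Aux4

/-- On the graph `G_n` (`n ≥ 2`) there exists a hierarchical clustering tree `T'` such that
every hierarchical clustering tree `T` in which, for each `i`, the leaves `a_i` and `b_i`
are the two children of a common internal node satisfies
`val(T) ≤ (2(n+1)/(3n))·val(T')`. -/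
theorem stmt14 (n : ℕ) (hn : 2 ≤ n) :
    ∃ t' : HC (Fin n ⊕ Fin n), t'.IsTreeOn ∧
      ∀ t : HC (Fin n ⊕ Fin n), t.IsTreeOn → pairCond n t →
        HC.val (wG n) t ≤ (2 * ((n : ℝ) + 1) / (3 * (n : ℝ))) * HC.val (wG n) t' := by
  classical
  have hn0 : n ≠ 0 := by omega
  have i0 : Fin n := ⟨0, by omega⟩
  set d : Fin n ⊕ Fin n := Sum.inl i0 with hd
  set lL : List (Fin n ⊕ Fin n) := (List.finRange n).map Sum.inl with hlL
  set lR : List (Fin n ⊕ Fin n) := (List.finRange n).map Sum.inr with hlR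
  have hLne : lL ≠ [] := by
    simp [hlL, List.map_eq_nil_iff, ← List.length_eq_zero_iff, hn0]
  have hRne : lR ≠ [] := by
    simp [hlR, List.map_eq_nil_iff, ← List.length_eq_zero_iff, hn0]
  set tL : HC (Fin n ⊕ Fin n) := ofList d lL with htL
  set tR : HC (Fin n ⊕ Fin n) := ofList d lR with htR
  set t' : HC (Fin n ⊕ Fin n) := HC.node tL tR with ht'
  have hLlist : tL.leafList = lL := ofList_leafList d lL hLne
  have hRlist : tR.leafList = lR := ofList_leafList d lR hRne
  have ht'list : t'.leafList = lL ++ lR := by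
    rw [ht', show (HC.node tL tR).leafList = tL.leafList ++ tR.leafList from rfl,
      hLlist, hRlist]
  have hnodup : t'.leafList.Nodup := by
    rw [ht'list, List.nodup_append]
    refine ⟨(List.nodup_finRange n).map Sum.inl_injective,
      (List.nodup_finRange n).map Sum.inr_injective, ?_⟩
    intro x hx y hy
    simp only [hlL, hlR, List.mem_map] at hx hy
    obtain ⟨a, _, rfl⟩ := hx
    obtain ⟨b, _, rfl⟩ := hy
    exact fun hb => nomatch hb
  have huniv : t'.leaves = Finset.univ := by
    apply Finset.eq_univ_iff_forall.mpr
    intro x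
    rw [HC.leaves, ht'list]
    cases x <;> simp [hlL, hlR, List.mem_finRange]
  have hLleaves : tL.leaves = lL.toFinset := by rw [HC.leaves, hLlist]
  have hRleaves : tR.leaves = lR.toFinset := by rw [HC.leaves, hRlist]
  have hdis : Disjoint tL.leaves tR.leaves := (nodup_node (by rw [← ht'] at *; exact hnodup)).2.2
  have hcardt' : ((t'.leaves.card : ℕ) : ℝ) = 2 * (n : ℝ) := by
    rw [huniv, Finset.card_univ]
    simp
    ring
  -- value of t'
  have hvalt' : HC.val (wG n) t' = (1/2) * (2 * (n : ℝ) * ((n:ℝ) - 1)) * (2 * (n:ℝ)) := by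
    rw [HC.val, HC.cost]
    have hterm : ∀ p ∈ (Finset.univ : Finset (Fin n ⊕ Fin n)).offDiag,
        wG n p.1 p.2 * ((t'.cluster p.1 p.2).card : ℝ)
          = wG n p.1 p.2 * (2 * (n:ℝ)) := by
      rintro ⟨x, y⟩ _
      cases x with
      | inl i =>
        cases y with
        | inl j => rw [show wG n (Sum.inl i) (Sum.inl j) = 0 from rfl]; ring
        | inr j =>
          by_cases hij : i = j
          · subst hij
            rw [show wG n (Sum.inl i) (Sum.inr i) = 0 from by simp [wG]]
            ring
          · have hx : Sum.inl i ∈ tL.leaves := by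
              rw [hLleaves]; simp [hlL, List.mem_finRange]
            have hy : Sum.inr j ∈ tR.leaves := by
              rw [hRleaves]; simp [hlR, List.mem_finRange]
            rw [show (t'.cluster (Sum.inl i) (Sum.inr j)) = t'.leaves from
              cluster_cross hdis hx hy, hcardt']
      | inr i =>
        cases y with
        | inr j => rw [show wG n (Sum.inr i) (Sum.inr j) = 0 from rfl]; ring
        | inl j =>
          by_cases hij : i = j
          · subst hij
            rw [show wG n (Sum.inr i) (Sum.inl i) = 0 from by simp [wG]]
            ring
          · have hx : Sum.inr i ∈ tR.leaves := by
              rw [hRleaves]; simp [hlR, List.mem_finRange]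
            have hy : Sum.inl j ∈ tL.leaves := by
              rw [hLleaves]; simp [hlL, List.mem_finRange]
            rw [show (t'.cluster (Sum.inr i) (Sum.inl j)) = t'.leaves from
              cluster_cross' hdis hx hy, hcardt']
    rw [Finset.sum_congr rfl hterm, ← Finset.sum_mul, total_w]
    ring
  refine ⟨t', ⟨hnodup, huniv⟩, ?_⟩
  rintro t ⟨ht1, ht2⟩ hpc
  have h2t : ∀ i : Fin n, Sum.inl i ∈ t.leaves ↔ Sum.inr i ∈ t.leaves := by
    intro i; simp [ht2]
  have hkey := key n t ht1 h2t (fun i _ => hpc i)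
  have hpcn : pcnt n t = n := by
    unfold pcnt
    simp [ht2]
  have hsum := hkey.2
  rw [ht2, hpcn] at hsum
  have hvalt : HC.val (wG n) t = (1/2) * (8 * ((n:ℝ)^3 - (n:ℝ)) / 3) := by
    rw [HC.val, HC.cost, hsum]
  rw [hvalt, hvalt']
  apply le_of_eq
  have hne : (n : ℝ) ≠ 0 := Nat.cast_ne_zero.mpr hn0
  field_simp
  ring
end
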